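/- arXiv:1604.00959 — 9 statements merged into one kernel-verified Lean document; each statement's English description precedes it below -/
import Mathlib

section
/- Every (-ω)-reset A-graph is deterministic and complete. -/
/- Left infinite words over A are modelled as functions ℕ → A, where index 0 is
   the rightmost letter.  Appending a finite word on the right: -/

def lapp {A : Type*} (x : ℕ → A) (u : List A) : ℕ → A := fun n =>
  if h : n < u.length then u.reverse[n]'(by simpa using h) else x (n - u.length)

/-- u ∈ A* is a suffix of the left infinite word x -/
def IsLSuffix {A : Type*} (u : List A) (x : ℕ → A) : Prop := ∃ y : ℕ → A, x = lapp y u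

/-- right congruence on A^{-ω}: an equivalence relation compatible with the
  right action of A* (equivalently, with appending each letter) -/
def IsRightCongruence {A : Type*} (ρ : (ℕ → A) → (ℕ → A) → Prop) : Prop :=
  Equivalence ρ ∧ ∀ x y : ℕ → A, ∀ a : A, ρ x y → ρ (lapp x [a]) (lapp y [a])

section Graphs

variable {A Q : Type*}

/-- a left infinite path labelled x ending at q, in the A-graph with edge
  relation E (E p a q : there is an edge from p to q labelled a) -/
def HasLInfPath (E : Q → A → Q → Prop) (x : ℕ → A) (q : Q) : Prop :=
  ∃ f : ℕ → Q, f 0 = q ∧ ∀ n : ℕ, E (f (n + 1)) (x n) (f n)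

def OmegaDeterministic (E : Q → A → Q → Prop) : Prop :=
  ∀ x : ℕ → A, ∀ q q' : Q, HasLInfPath E x q → HasLInfPath E x q' → q = q'

def OmegaComplete (E : Q → A → Q → Prop) : Prop :=
  ∀ x : ℕ → A, ∃ q : Q, HasLInfPath E x q

def OmegaTrim (E : Q → A → Q → Prop) : Prop :=
  ∀ q : Q, ∃ x : ℕ → A, HasLInfPath E x q

/-- (-ω)-reset graph -/
def OmegaReset (E : Q → A → Q → Prop) : Prop :=
  OmegaDeterministic E ∧ OmegaComplete E ∧ OmegaTrim E

/-- finite paths: HasPath E q u q' means u labels a path from q to q' -/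
def HasPath (E : Q → A → Q → Prop) : Q → List A → Q → Prop
  | q, [], q' => q = q'
  | q, a :: u, q' => ∃ p : Q, E q a p ∧ HasPath E p u q'

end Graphs

/-- the setoid on A^{-ω} given by a right congruence -/
def caySetoid {A : Type*} {ρ : (ℕ → A) → (ℕ → A) → Prop} (hρ : IsRightCongruence ρ) :
    Setoid (ℕ → A) := ⟨ρ, hρ.1⟩

/-- the edge relation of the Cayley graph Cay(ρ): edges (uρ, a, (ua)ρ) -/
def cayE {A : Type*} {ρ : (ℕ → A) → (ℕ → A) → Prop} (hρ : IsRightCongruence ρ) :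
    Quotient (caySetoid hρ) → A → Quotient (caySetoid hρ) → Prop :=
  fun c a c' => ∃ u : ℕ → A, c = Quotient.mk (caySetoid hρ) u ∧
    c' = Quotient.mk (caySetoid hρ) (lapp u [a])


lemma lapp_single_zero {A : Type*} (x : ℕ → A) (a : A) : lapp x [a] 0 = a := by
  simp [lapp]

lemma lapp_single_succ {A : Type*} (x : ℕ → A) (a : A) (n : ℕ) :
    lapp x [a] (n + 1) = x n := by
  simp [lapp]

lemma hasLInfPath_extend {A Q : Type*} {E : Q → A → Q → Prop} {x : ℕ → A} {p q : Q}
    (hp : HasLInfPath E x p) {a : A} (he : E p a q) : HasLInfPath E (lapp x [a]) q := by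
  obtain ⟨f, hf0, hf⟩ := hp
  refine ⟨fun n => Nat.rec q (fun k _ => f k) n, rfl, ?_⟩
  intro n
  cases n with
  | zero => simpa [lapp_single_zero, hf0] using he
  | succ n => simpa [lapp_single_succ] using hf n

/-- every (-ω)-reset A-graph is deterministic and complete. -/
theorem omegaReset_deterministic_complete {A Q : Type*} (E : Q → A → Q → Prop)
    (h : OmegaReset E) :
    (∀ p : Q, ∀ a : A, ∀ q q' : Q, E p a q → E p a q' → q = q') ∧
    (∀ p : Q, ∀ a : A, ∃ q : Q, E p a q) := by
  obtain ⟨hdet, hcomp, htrim⟩ := h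
  constructor
  · intro p a q q' hq hq'
    obtain ⟨x, hx⟩ := htrim p
    exact hdet (lapp x [a]) q q' (hasLInfPath_extend hx hq) (hasLInfPath_extend hx hq')
  · intro p a
    obtain ⟨x, hx⟩ := htrim p
    obtain ⟨q, f, hf0, hf⟩ := hcomp (lapp x [a])
    have hpath : HasLInfPath E x (f 1) := by
      refine ⟨fun n => f (n + 1), rfl, fun n => ?_⟩
      simpa [lapp_single_succ] using hf (n + 1)
    have := hdet x (f 1) p hpath hx
    refine ⟨q, ?_⟩
    have h0 := hf 0
    rw [lapp_single_zero, this, hf0] at h0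
    exact h0
end

section
/- If ρ is a closed right congruence on A^{-ω}, then in Cay(ρ) every left infinite path labeled x ends at the vertex xρ, and Cay(ρ) is a (-ω)-reset graph. -/
private lemma lapp_nil {A : Type*} (y : ℕ → A) : lapp y [] = y := by
  funext n; simp [lapp]

private lemma lapp_append {A : Type*} (y : ℕ → A) (u v : List A) :
    lapp (lapp y u) v = lapp y (u ++ v) := by
  funext n
  simp only [lapp, List.reverse_append, List.length_append]
  by_cases h1 : n < v.length
  · rw [dif_pos h1, dif_pos (by omega)]
    rw [List.getElem_append_left (by simpa using h1)]
  · rw [dif_neg h1]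
    by_cases h2 : n - v.length < u.length
    · rw [dif_pos h2, dif_pos (by omega)]
      rw [List.getElem_append_right (by simpa using h1)]
      simp
    · rw [dif_neg h2, dif_neg (by omega)]
      congr 1
      omega

private lemma path_to_self {A : Type*} {ρ : (ℕ → A) → (ℕ → A) → Prop}
    (hρ : IsRightCongruence ρ) (x : ℕ → A) :
    HasLInfPath (cayE hρ) x (Quotient.mk (caySetoid hρ) x) := by
  refine ⟨fun n => Quotient.mk (caySetoid hρ) (fun m => x (m + n)), rfl, fun n => ?_⟩
  refine ⟨fun m => x (m + (n + 1)), rfl, ?_⟩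
  show Quotient.mk (caySetoid hρ) (fun m => x (m + n)) = _
  apply congrArg
  funext m
  simp only [lapp, List.length_cons, List.length_nil]
  split_ifs with h
  · have : m = 0 := by omega
    subst this; simp
  · congr 1; omega

private lemma path_rep {A : Type*} {ρ : (ℕ → A) → (ℕ → A) → Prop}
    (hρ : IsRightCongruence ρ) (x : ℕ → A) (f : ℕ → Quotient (caySetoid hρ))
    (hf : ∀ n, cayE hρ (f (n + 1)) (x n) (f n)) :
    ∀ n : ℕ, ∀ u : ℕ → A, f n = Quotient.mk (caySetoid hρ) u →
      f 0 = Quotient.mk (caySetoid hρ) (lapp u (((List.range n).map x).reverse)) := by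
  intro n
  induction n with
  | zero => intro u h; simpa [lapp_nil] using h
  | succ n ih =>
    intro u h
    obtain ⟨v, hv1, hv2⟩ := hf n
    have hρuv : ρ u v := Quotient.exact (h.symm.trans hv1)
    have hfn : f n = Quotient.mk (caySetoid hρ) (lapp u [x n]) := by
      rw [hv2]
      exact Quotient.sound (hρ.2 v u (x n) (hρ.1.symm hρuv))
    have := ih _ hfn
    rw [this, lapp_append]
    congr 1
    simp [List.range_succ]

/-- if ρ is a closed right congruence on A^{-ω} (A^{-ω} = ℕ → A
  with the product topology of the discrete topology, which is the topology of
  the suffix ultrametric), then every left infinite path labelled x in Cay(ρ)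
  ends at xρ, and Cay(ρ) is a (-ω)-reset graph. -/
theorem cayley_closed_omegaReset {A : Type*} [TopologicalSpace A] [DiscreteTopology A]
    (ρ : (ℕ → A) → (ℕ → A) → Prop) (hρ : IsRightCongruence ρ)
    (hclosed : IsClosed {p : (ℕ → A) × (ℕ → A) | ρ p.1 p.2}) :
    (∀ x : ℕ → A, ∀ q : Quotient (caySetoid hρ),
        HasLInfPath (cayE hρ) x q → q = Quotient.mk (caySetoid hρ) x) ∧
    OmegaReset (cayE hρ) := by
  have main : ∀ x : ℕ → A, ∀ q : Quotient (caySetoid hρ),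
      HasLInfPath (cayE hρ) x q → q = Quotient.mk (caySetoid hρ) x := by
    intro x q ⟨f, hf0, hf⟩
    obtain ⟨z, hz⟩ := Quotient.exists_rep q
    -- for each n, a representative of q agreeing with x on [0, n)
    have key : ∀ n : ℕ, ∃ w : ℕ → A, (∀ m < n, w m = x m) ∧ ρ w z := by
      intro n
      obtain ⟨u, hu⟩ := Quotient.exists_rep (f n)
      have h := path_rep hρ x f hf n u hu.symm
      refine ⟨lapp u (((List.range n).map x).reverse), fun m hm => ?_, ?_⟩
      · simp only [lapp, List.length_reverse, List.length_map, List.length_range]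
        rw [dif_pos hm]
        simp
      · exact Quotient.exact ((hf0 ▸ h.symm : Quotient.mk _ _ = q).trans hz.symm)
    choose w hw hwz using key
    have htw : Filter.Tendsto w Filter.atTop (nhds x) := by
      rw [tendsto_pi_nhds]
      intro m
      rw [nhds_discrete, Filter.tendsto_pure]
      exact Filter.eventually_atTop.2 ⟨m + 1, fun n hn => hw n m (by omega)⟩
    have htend : Filter.Tendsto (fun n => (w n, z)) Filter.atTop (nhds (x, z)) :=
      htw.prodMk_nhds tendsto_const_nhds
    have hmem : (x, z) ∈ {p : (ℕ → A) × (ℕ → A) | ρ p.1 p.2} :=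
      hclosed.mem_of_tendsto htend (Filter.Eventually.of_forall fun n => hwz n)
    rw [← hz]
    exact Quotient.sound (hρ.1.symm hmem)
  refine ⟨main, ?_, ?_, ?_⟩
  · intro x q q' hq hq'
    rw [main x q hq, main x q' hq']
  · intro x
    exact ⟨Quotient.mk (caySetoid hρ) x, path_to_self hρ x⟩
  · intro q
    obtain ⟨u, hu⟩ := Quotient.exists_rep q
    exact ⟨u, hu ▸ path_to_self hρ u⟩
end

section
/- For a right congruence ρ on A^{-ω}, the following are equivalent: (i) ρ is an open subset of A^{-ω} × A^{-ω}; (ii) every ρ-class is open; (iii) ρ = σ̂ for some right congruence σ on A^k and some k ≥ 1, where x σ̂ y iff the length-k suffixes of x and y are σ-related; (vi) ρ is closed and has finitely many classes. -/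
/- Words of length k over A are modelled as Fin k → A, index 0 being the
   rightmost letter (so that `fun i : Fin k => x i` is the length-k suffix ξ_k
   of the left infinite word x).  The right action of a letter: -/

def wcons {A : Type*} {k : ℕ} (a : A) (u : Fin k → A) : Fin k → A :=
  fun i => if h : (i : ℕ) = 0 then a
    else u ⟨(i : ℕ) - 1, Nat.lt_of_le_of_lt (Nat.sub_le _ _) i.isLt⟩

/-- appending a length-k word on the right of a left infinite word -/
def lappF {A : Type*} {k : ℕ} (x : ℕ → A) (u : Fin k → A) : ℕ → A :=
  fun n => if h : n < k then u ⟨n, h⟩ else x (n - k)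


set_option linter.unusedSectionVars false
section AuxSSS
variable {A : Type*} [Fintype A] [Nonempty A] [TopologicalSpace A] [DiscreteTopology A]

private def cylSSS (x : ℕ → A) (k : ℕ) : Set (ℕ → A) := {y | ∀ i < k, y i = x i}

private lemma cylSSS_open (x : ℕ → A) (k : ℕ) : IsOpen (cylSSS x k) := by
  have : cylSSS x k = ⋂ i ∈ Finset.range k, (fun y : ℕ → A => y i) ⁻¹' {x i} := by
    ext y; simp [cylSSS]
  rw [this]
  exact isOpen_biInter_finset fun i _ =>
    (continuous_apply i).isOpen_preimage _ (isOpen_discrete _)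

private lemma cylSSS_mem_nhds {x : ℕ → A} {S : Set (ℕ → A)} (hS : S ∈ nhds x) :
    ∃ k, cylSSS x k ⊆ S := by
  rw [nhds_pi, Filter.mem_pi] at hS
  obtain ⟨I, hI, t, ht, hsub⟩ := hS
  obtain ⟨k, hk⟩ := hI.bddAbove
  refine ⟨k + 1, fun y hy => hsub fun i hi => ?_⟩
  have : y i = x i := hy i (Nat.lt_succ_of_le (hk hi))
  rw [this]
  exact mem_of_mem_nhds (ht i)

private lemma uniformSSS {ρ : (ℕ → A) → (ℕ → A) → Prop} (hrefl : ∀ x, ρ x x)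
    (ho : IsOpen {p : (ℕ → A) × (ℕ → A) | ρ p.1 p.2}) :
    ∃ k, 1 ≤ k ∧ ∀ x y : ℕ → A, (∀ i < k, x i = y i) → ρ x y := by
  have key : ∀ x : ℕ → A, ∃ k,
      (cylSSS x k) ×ˢ (cylSSS x k) ⊆ {p : (ℕ → A) × (ℕ → A) | ρ p.1 p.2} := by
    intro x
    have hx : {p : (ℕ → A) × (ℕ → A) | ρ p.1 p.2} ∈ nhds (x, x) := ho.mem_nhds (hrefl x)
    rw [nhds_prod_eq, Filter.mem_prod_iff] at hx
    obtain ⟨U, hU, V, hV, hUV⟩ := hx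
    obtain ⟨k1, hk1⟩ := cylSSS_mem_nhds hU
    obtain ⟨k2, hk2⟩ := cylSSS_mem_nhds hV
    refine ⟨max k1 k2, fun p hp => hUV
      ⟨hk1 fun i hi => hp.1 i (lt_of_lt_of_le hi (le_max_left _ _)),
       hk2 fun i hi => hp.2 i (lt_of_lt_of_le hi (le_max_right _ _))⟩⟩
  choose K hK using key
  obtain ⟨t, ht⟩ := isCompact_univ.elim_finite_subcover (fun x => cylSSS x (K x))
    (fun x => cylSSS_open x (K x)) (fun x _ => Set.mem_iUnion.2 ⟨x, fun _ _ => rfl⟩)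
  refine ⟨(t.sup K) + 1, Nat.le_add_left 1 _, fun x y hxy => ?_⟩
  obtain ⟨z, hz, hxz⟩ := Set.mem_iUnion₂.1 (ht (Set.mem_univ x))
  have hKz : K z ≤ t.sup K + 1 := le_trans (Finset.le_sup hz) (Nat.le_succ _)
  have hy : y ∈ cylSSS z (K z) := fun i hi => by
    rw [← hxy i (lt_of_lt_of_le hi hKz)]; exact hxz i hi
  exact hK z (Set.mk_mem_prod hxz hy)

end AuxSSS

/-- for a right congruence ρ on A^{-ω}: ρ is open iff all ρ-classes
  are open, iff ρ is the lift σ̂ of a right congruence σ on A^k for some k ≥ 1,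
  iff ρ is closed of finite index. -/
theorem open_rightCongruence_characterizations {A : Type*} [Fintype A] [Nonempty A]
    [TopologicalSpace A] [DiscreteTopology A]
    (ρ : (ℕ → A) → (ℕ → A) → Prop) (hρ : IsRightCongruence ρ) :
    ((IsOpen {p : (ℕ → A) × (ℕ → A) | ρ p.1 p.2}) ↔ (∀ x : ℕ → A, IsOpen {y | ρ x y})) ∧
    ((IsOpen {p : (ℕ → A) × (ℕ → A) | ρ p.1 p.2}) ↔
      (∃ k : ℕ, 1 ≤ k ∧ ∃ σ : (Fin k → A) → (Fin k → A) → Prop,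
        (Equivalence σ ∧ ∀ u v : Fin k → A, ∀ a : A, σ u v → σ (wcons a u) (wcons a v)) ∧
        (∀ x y : ℕ → A, ρ x y ↔ σ (fun i : Fin k => x i) (fun i : Fin k => y i)))) ∧
    ((IsOpen {p : (ℕ → A) × (ℕ → A) | ρ p.1 p.2}) ↔
      (IsClosed {p : (ℕ → A) × (ℕ → A) | ρ p.1 p.2} ∧
        Set.Finite {s : Set (ℕ → A) | ∃ x : ℕ → A, s = {y | ρ x y}})) := by
  have E := hρ.1
  set R := {p : (ℕ → A) × (ℕ → A) | ρ p.1 p.2} with hR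
  -- (i) → (ii)
  have h12 : IsOpen R → ∀ x : ℕ → A, IsOpen {y | ρ x y} := by
    intro h x
    have : {y | ρ x y} = (fun y => (x, y)) ⁻¹' R := rfl
    rw [this]
    exact h.preimage (continuous_const.prodMk continuous_id)
  -- (ii) → (i)
  have h21 : (∀ x : ℕ → A, IsOpen {y | ρ x y}) → IsOpen R := by
    intro h
    have : R = ⋃ x : ℕ → A, {y | ρ x y} ×ˢ {y | ρ x y} := by
      ext p
      constructor
      · intro hp
        exact Set.mem_iUnion.2 ⟨p.1, Set.mk_mem_prod (E.refl p.1) hp⟩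
      · intro hp
        obtain ⟨x, hx⟩ := Set.mem_iUnion.1 hp
        exact E.trans (E.symm hx.1) hx.2
    rw [this]
    exact isOpen_iUnion fun x => (h x).prod (h x)
  -- (i) → (iii)
  have h13 : IsOpen R →
      ∃ k : ℕ, 1 ≤ k ∧ ∃ σ : (Fin k → A) → (Fin k → A) → Prop,
        (Equivalence σ ∧ ∀ u v : Fin k → A, ∀ a : A, σ u v → σ (wcons a u) (wcons a v)) ∧
        (∀ x y : ℕ → A, ρ x y ↔ σ (fun i : Fin k => x i) (fun i : Fin k => y i)) := by
    intro h
    obtain ⟨k, hk1, hu⟩ := uniformSSS E.refl h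
    set z : ℕ → A := fun _ => Classical.arbitrary A with hz
    refine ⟨k, hk1, fun u v => ρ (lappF z u) (lappF z v), ⟨⟨?_, ?_, ?_⟩, ?_⟩, ?_⟩
    · exact fun u => E.refl _
    · exact fun h => E.symm h
    · exact fun h h' => E.trans h h'
    · -- congruence
      intro u v a huv
      have step : ρ (lapp (lappF z u) [a]) (lapp (lappF z v) [a]) := hρ.2 _ _ a huv
      have link : ∀ w : Fin k → A,
          ρ (lapp (lappF z w) [a]) (lappF z (wcons a w)) := by
        intro w
        apply hu
        intro n hn
        rcases Nat.eq_zero_or_pos n with h0 | h0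
        · subst h0; simp [lapp, lappF, wcons, hn]
        · have h1 : ¬ n < 1 := by omega
          have h2 : n - 1 < k := by omega
          have h3 : n ≠ 0 := by omega
          simp [lapp, lappF, wcons, h1, h2, h3, hn]
      exact E.trans (E.symm (link u)) (E.trans step (link v))
    · -- ρ determined by suffix
      intro x y
      have key : ∀ x : ℕ → A, ρ x (lappF z (fun i : Fin k => x i)) := by
        intro x
        apply hu
        intro n hn
        simp [lappF, hn]
      constructor
      · intro hxy
        exact E.trans (E.symm (key x)) (E.trans hxy (key y))
      · intro hxy
        exact E.trans (key x) (E.trans hxy (E.symm (key y)))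
  -- (iii) → (i)
  have h31 : (∃ k : ℕ, 1 ≤ k ∧ ∃ σ : (Fin k → A) → (Fin k → A) → Prop,
        (Equivalence σ ∧ ∀ u v : Fin k → A, ∀ a : A, σ u v → σ (wcons a u) (wcons a v)) ∧
        (∀ x y : ℕ → A, ρ x y ↔ σ (fun i : Fin k => x i) (fun i : Fin k => y i))) →
      IsOpen R := by
    rintro ⟨k, -, σ, -, hσ⟩
    have hcont : Continuous (fun p : (ℕ → A) × (ℕ → A) =>
        ((fun i : Fin k => p.1 i), (fun i : Fin k => p.2 i))) :=
      ((continuous_pi fun i : Fin k => continuous_apply (i : ℕ)).comp continuous_fst).prodMk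
        ((continuous_pi fun i : Fin k => continuous_apply (i : ℕ)).comp continuous_snd)
    have : R = (fun p : (ℕ → A) × (ℕ → A) =>
        ((fun i : Fin k => p.1 i), (fun i : Fin k => p.2 i))) ⁻¹'
        {q : (Fin k → A) × (Fin k → A) | σ q.1 q.2} := by
      ext p; exact hσ p.1 p.2
    rw [this]
    exact (isOpen_discrete _).preimage hcont
  -- (iii) → (iv)
  have h34 : (∃ k : ℕ, 1 ≤ k ∧ ∃ σ : (Fin k → A) → (Fin k → A) → Prop,
        (Equivalence σ ∧ ∀ u v : Fin k → A, ∀ a : A, σ u v → σ (wcons a u) (wcons a v)) ∧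
        (∀ x y : ℕ → A, ρ x y ↔ σ (fun i : Fin k => x i) (fun i : Fin k => y i))) →
      IsClosed R ∧ Set.Finite {s : Set (ℕ → A) | ∃ x : ℕ → A, s = {y | ρ x y}} := by
    rintro ⟨k, -, σ, -, hσ⟩
    have hcont : Continuous (fun p : (ℕ → A) × (ℕ → A) =>
        ((fun i : Fin k => p.1 i), (fun i : Fin k => p.2 i))) :=
      ((continuous_pi fun i : Fin k => continuous_apply (i : ℕ)).comp continuous_fst).prodMk
        ((continuous_pi fun i : Fin k => continuous_apply (i : ℕ)).comp continuous_snd)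
    have hRe : R = (fun p : (ℕ → A) × (ℕ → A) =>
        ((fun i : Fin k => p.1 i), (fun i : Fin k => p.2 i))) ⁻¹'
        {q : (Fin k → A) × (Fin k → A) | σ q.1 q.2} := by
      ext p; exact hσ p.1 p.2
    constructor
    · rw [hRe]
      exact (isClosed_discrete _).preimage hcont
    · apply Set.Finite.subset
        (Set.finite_range fun u : Fin k → A => {y : ℕ → A | σ u (fun i : Fin k => y i)})
      rintro s ⟨x, rfl⟩
      exact ⟨fun i : Fin k => x i, by ext y; exact (hσ x y).symm⟩
  -- (iv) → (ii)
  have h42 : (IsClosed R ∧ Set.Finite {s : Set (ℕ → A) | ∃ x : ℕ → A, s = {y | ρ x y}}) →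
      ∀ x : ℕ → A, IsOpen {y | ρ x y} := by
    rintro ⟨hcl, hfin⟩ x
    have hclass_closed : ∀ w : ℕ → A, IsClosed {y | ρ w y} := by
      intro w
      have : {y | ρ w y} = (fun y => (w, y)) ⁻¹' R := rfl
      rw [this]
      exact hcl.preimage (continuous_const.prodMk continuous_id)
    have hFfin : Set.Finite {s : Set (ℕ → A) | (∃ w : ℕ → A, s = {y | ρ w y}) ∧ x ∉ s} :=
      hfin.subset fun s hs => hs.1
    have hcompl : {y | ρ x y}ᶜ =
        ⋃ s ∈ {s : Set (ℕ → A) | (∃ w : ℕ → A, s = {y | ρ w y}) ∧ x ∉ s}, s := by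
      ext y
      constructor
      · intro hy
        refine Set.mem_biUnion ⟨⟨y, rfl⟩, fun hx => hy (E.symm hx)⟩ (E.refl y)
      · rintro hy hxy
        obtain ⟨s, ⟨⟨w, rfl⟩, hxs⟩, hys⟩ := Set.mem_iUnion₂.1 hy
        exact hxs (E.trans hys (E.symm hxy))
    have : IsClosed ({y | ρ x y}ᶜ) := by
      rw [hcompl]
      exact hFfin.isClosed_biUnion fun s hs => by
        obtain ⟨⟨w, rfl⟩, -⟩ := hs
        exact hclass_closed w
    simpa using this.isOpen_compl
  exact ⟨⟨h12, h21⟩, ⟨h13, h31⟩,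
    ⟨fun h => h34 (h13 h), fun h => h21 (h42 h)⟩⟩
end

section
/- The right congruence ρ on {a,b}^{-ω} defined by x ρ y iff (b occurs in x iff b occurs in y) has exactly two classes but is not closed for the suffix metric. -/
lemma lapp_single_exists {A : Type*} (x : ℕ → A) (c b : A) :
    (∃ n, lapp x [c] n = b) ↔ (c = b ∨ ∃ n, x n = b) := by
  constructor
  · rintro ⟨n, hn⟩
    unfold lapp at hn
    by_cases h : n < 1
    · left; interval_cases n; simpa using hn
    · right; exact ⟨n - 1, by simpa [h] using hn⟩
  · rintro (h | ⟨n, hn⟩)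
    · exact ⟨0, by simp [lapp, h]⟩
    · exact ⟨n + 1, by simpa [lapp] using hn⟩

/-- over A = {a,b}, the relation "b occurs in x iff b occurs in y"
  is a right congruence on A^{-ω} with exactly two classes, but it is not closed. -/
theorem occurrence_congruence_two_classes_not_closed {A : Type*}
    [TopologicalSpace A] [DiscreteTopology A] (a b : A) (hab : a ≠ b)
    (hA : ∀ c : A, c = a ∨ c = b) :
    IsRightCongruence (fun x y : ℕ → A => ((∃ n, x n = b) ↔ (∃ n, y n = b))) ∧
    (∃ x y : ℕ → A, ¬ ((∃ n, x n = b) ↔ (∃ n, y n = b)) ∧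
      ∀ z : ℕ → A, ((∃ n, z n = b) ↔ (∃ n, x n = b)) ∨ ((∃ n, z n = b) ↔ (∃ n, y n = b))) ∧
    ¬ IsClosed {p : (ℕ → A) × (ℕ → A) | (∃ n, p.1 n = b) ↔ (∃ n, p.2 n = b)} := by
  classical
  set y : ℕ → A := fun n => if n = 0 then b else a with hy
  have hyb : ∃ n, y n = b := ⟨0, by simp [hy]⟩
  refine ⟨⟨⟨fun x => Iff.rfl, fun h => h.symm, fun h1 h2 => h1.trans h2⟩, ?_⟩, ?_, ?_⟩
  · intro x y c h
    rw [lapp_single_exists, lapp_single_exists, h]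
  · refine ⟨(fun _ => a), y, ?_, ?_⟩
    · intro h
      obtain ⟨n, hn⟩ := h.mpr hyb
      exact hab hn
    · intro z
      by_cases h : ∃ n, z n = b
      · right
        exact iff_of_true h hyb
      · left
        constructor
        · intro h'; exact absurd h' h
        · rintro ⟨n, hn⟩; exact absurd hn hab
  · intro hcl
    set X : ℕ → (ℕ → A) × (ℕ → A) := fun k => (fun n => if n = k then b else a, y) with hX
    have hmem : ∀ k, X k ∈ {p : (ℕ → A) × (ℕ → A) | (∃ n, p.1 n = b) ↔ (∃ n, p.2 n = b)} := by
      intro k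
      exact iff_of_true ⟨k, by simp [hX]⟩ hyb
    have htend : Filter.Tendsto X Filter.atTop (nhds ((fun _ => a), y)) := by
      apply Filter.Tendsto.prodMk_nhds
      · rw [tendsto_pi_nhds]
        intro n
        apply tendsto_const_nhds.congr'
        filter_upwards [Filter.eventually_gt_atTop n] with k hk
        simp [hX, hk.ne]
      · exact tendsto_const_nhds
    have hlim := hcl.mem_of_tendsto htend (Filter.Eventually.of_forall hmem)
    obtain ⟨n, hn⟩ := hlim.mpr hyb
    exact hab hn
end

section
/- For any right congruence ρ on A^{-ω} and any k ≥ 1, the transitive closure ρ^[k] of the relation ρ^(k) on A^k is a right congruence on A^k, and ρ ⊆ ⋂_{n≥1} ρ^[n]^ (the intersection over n of the lifts of ρ^[n] to A^{-ω}). -/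
private theorem tg_symm {α} {r : α → α → Prop} (hs : ∀ a b, r a b → r b a) {a b}
    (h : Relation.TransGen r a b) : Relation.TransGen r b a := by
  induction h with
  | single h => exact Relation.TransGen.single (hs _ _ h)
  | tail _ h₂ ih => exact (Relation.TransGen.single (hs _ _ h₂)).trans ih

private theorem lapp_single {A : Type*} (x : ℕ → A) (b : A) (n : ℕ) :
    lapp x [b] n = if n = 0 then b else x (n - 1) := by
  simp only [lapp, List.length_cons, List.length_nil]
  split
  · rename_i h
    rw [if_pos (by omega : n = 0)]
    simp [show n = 0 by omega]
  · rw [if_neg (by omega)]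

private theorem lapp_lappF {A : Type*} {k : ℕ} (hk : 1 ≤ k) (x : ℕ → A) (u : Fin k → A)
    (a : A) :
    lapp (lappF x u) [a] = lappF (lapp x [u ⟨k - 1, by omega⟩]) (wcons a u) := by
  funext n
  rw [lapp_single]
  simp only [lappF, wcons]
  rcases Nat.lt_or_ge n k with h1 | h1
  · rw [dif_pos h1]
    by_cases h0 : n = 0
    · subst h0
      rw [if_pos rfl, dif_pos rfl]
    · rw [if_neg h0, dif_neg h0, dif_pos (by omega : n - 1 < k)]
  · rw [if_neg (show ¬ n = 0 by omega), dif_neg (show ¬ n < k by omega), lapp_single]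
    rcases Nat.eq_or_lt_of_le h1 with h2 | h2
    · subst h2
      rw [dif_pos (by omega), if_pos (by omega)]
    · rw [dif_neg (show ¬ n - 1 < k by omega), if_neg (show ¬ n - k = 0 by omega)]
      congr 1
      omega

/-- for a right congruence ρ on A^{-ω} and k ≥ 1, the transitive
  closure ρ^[k] of ρ^(k) is a right congruence on A^k, and ρ is contained in the
  intersection over n ≥ 1 of the lifts of ρ^[n]. -/
theorem transClosure_rightCongruence_and_approx {A : Type*} [Fintype A]
    (ρ : (ℕ → A) → (ℕ → A) → Prop) (hρ : IsRightCongruence ρ) (k : ℕ) (hk : 1 ≤ k) :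
    (Equivalence (Relation.TransGen
        (fun u v : Fin k → A => ∃ x y : ℕ → A, ρ (lappF x u) (lappF y v))) ∧
      (∀ u v : Fin k → A, ∀ a : A,
        Relation.TransGen (fun u v : Fin k → A => ∃ x y : ℕ → A, ρ (lappF x u) (lappF y v)) u v →
        Relation.TransGen (fun u v : Fin k → A => ∃ x y : ℕ → A, ρ (lappF x u) (lappF y v))
          (wcons a u) (wcons a v))) ∧
    (∀ x y : ℕ → A, ρ x y → ∀ n : ℕ, 1 ≤ n →
      Relation.TransGen (fun u v : Fin n → A => ∃ x' y' : ℕ → A, ρ (lappF x' u) (lappF y' v))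
        (fun i : Fin n => x i) (fun i : Fin n => y i)) := by
  set r := fun u v : Fin k → A => ∃ x y : ℕ → A, ρ (lappF x u) (lappF y v) with hr
  obtain ⟨⟨hrefl, hsymm, htrans⟩, hcong⟩ := hρ
  have hrs : ∀ u v, r u v → r v u := by
    rintro u v ⟨x, y, h⟩; exact ⟨y, x, hsymm h⟩
  have hstep : ∀ (a : A) (u v : Fin k → A), r u v → r (wcons a u) (wcons a v) := by
    rintro a u v ⟨x, y, h⟩
    refine ⟨lapp x [u ⟨k - 1, by omega⟩], lapp y [v ⟨k - 1, by omega⟩], ?_⟩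
    rw [← lapp_lappF hk, ← lapp_lappF hk]
    exact hcong _ _ a h
  refine ⟨⟨⟨?_, fun h => tg_symm hrs h, fun h1 h2 => h1.trans h2⟩, ?_⟩, ?_⟩
  · intro u
    exact .single ⟨fun _ => u ⟨0, hk⟩, fun _ => u ⟨0, hk⟩, hrefl _⟩
  · intro u v a h
    induction h with
    | single h => exact .single (hstep a _ _ h)
    | tail _ h₂ ih => exact ih.tail (hstep a _ _ h₂)
  · intro x y hxy n hn
    refine .single ⟨fun m => x (m + n), fun m => y (m + n), ?_⟩
    have e : ∀ z : ℕ → A, lappF (fun m => z (m + n)) (fun i : Fin n => z i) = z := by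
      intro z; funext m
      simp only [lappF]
      split
      · rfl
      · congr 1; omega
    rw [e, e]; exact hxy
end

section
/- Let I be a two-sided ideal of A* (with |A| ≥ 2). The right congruence τ_I on A^{-ω} is open if and only if A* ∖ I is finite, if and only if the suffix-minimal elements of I form a finite maximal suffix code. -/
/-- the relation τ_P: x τ_P y iff x = y or some u ∈ P is a common suffix of x and y -/
def relTau {A : Type*} (P : Set (List A)) : (ℕ → A) → (ℕ → A) → Prop :=
  fun x y => x = y ∨ ∃ u ∈ P, IsLSuffix u x ∧ IsLSuffix u y

/-- the suffix-minimal elements of L ⊆ A* (denoted Lβ_ℓ) -/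
def minSuffix {A : Type*} (L : Set (List A)) : Set (List A) :=
  {u | u ∈ L ∧ ∀ v ∈ L, v <:+ u → v = u}

/-- suffix code: an antichain for the suffix order -/
def IsSuffixCode {A : Type*} (S : Set (List A)) : Prop :=
  ∀ u ∈ S, ∀ v ∈ S, u <:+ v → u = v

set_option linter.unusedSectionVars false


namespace RelTauAux

variable {A : Type*}

/-- the suffix of x of length n, as a finite word -/
def sfx (x : ℕ → A) (n : ℕ) : List A := (List.ofFn fun i : Fin n => x i).reverse

@[simp] lemma sfx_length (x : ℕ → A) (n : ℕ) : (sfx x n).length = n := by simp [sfx]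

lemma sfx_reverse_getElem (x : ℕ → A) (n i : ℕ) (h : i < n) :
    (sfx x n).reverse[i]'(by simpa [sfx] using h) = x i := by
  simp [sfx]


lemma isLSuffix_iff {u : List A} {x : ℕ → A} :
    IsLSuffix u x ↔ ∀ i (h : i < u.length), x i = u.reverse[i]'(by simpa using h) := by
  constructor
  · rintro ⟨y, rfl⟩ i h
    simp [lapp, h]
  · intro h
    refine ⟨fun m => x (m + u.length), ?_⟩
    funext n
    unfold lapp
    split
    · exact h n ‹_›
    · congr 1; omega

lemma isLSuffix_sfx (x : ℕ → A) (n : ℕ) : IsLSuffix (sfx x n) x := by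
  rw [isLSuffix_iff]
  intro i h
  exact (sfx_reverse_getElem x n i (by simpa using h)).symm

lemma eq_sfx_of_isLSuffix {u : List A} {x : ℕ → A} (h : IsLSuffix u x) :
    u = sfx x u.length := by
  have h' := isLSuffix_iff.1 h
  apply List.reverse_injective
  apply List.ext_getElem (by simp [sfx])
  intro i h1 h2
  simp only [sfx, List.reverse_reverse, List.getElem_ofFn] at h2 ⊢
  exact (h' i (by simpa using h1)).symm

lemma isLSuffix_of_suffix {u v : List A} {x : ℕ → A} (hv : v <:+ u) (h : IsLSuffix u x) :
    IsLSuffix v x := by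
  rw [isLSuffix_iff] at h ⊢
  intro i hi
  have hp : v.reverse <+: u.reverse := List.reverse_prefix.2 hv
  have := hp.getElem (i := i) (by simpa using hi)
  rw [h i (lt_of_lt_of_le hi hv.length_le)]
  simpa using this.symm

lemma isLSuffix_transfer {u : List A} {x x' : ℕ → A} {n : ℕ} (hn : u.length ≤ n)
    (hag : ∀ i < n, x' i = x i) (h : IsLSuffix u x) : IsLSuffix u x' := by
  rw [isLSuffix_iff] at h ⊢
  intro i hi
  rw [hag i (lt_of_lt_of_le hi hn)]
  exact h i hi

lemma length_le_of_ne {u : List A} {x y : ℕ → A} {N : ℕ} (hx : IsLSuffix u x)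
    (hy : IsLSuffix u y) (hne : x N ≠ y N) : u.length ≤ N := by
  by_contra hlt
  push_neg at hlt
  exact hne ((isLSuffix_iff.1 hx N hlt).trans (isLSuffix_iff.1 hy N hlt).symm)

lemma sfx_suffix {x : ℕ → A} {m n : ℕ} (h : m ≤ n) : sfx x m <:+ sfx x n := by
  rw [sfx, sfx, List.reverse_suffix, List.prefix_iff_eq_take]
  apply List.ext_getElem (by simp [h])
  intro i h1 h2
  simp [List.getElem_take, List.getElem_ofFn]

lemma cylinder_isOpen [TopologicalSpace A] [DiscreteTopology A] (x : ℕ → A) (n : ℕ) :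
    IsOpen {x' : ℕ → A | ∀ i < n, x' i = x i} := by
  have : {x' : ℕ → A | ∀ i < n, x' i = x i}
      = ⋂ i ∈ Finset.range n, (fun x' : ℕ → A => x' i) ⁻¹' {x i} := by
    ext x'; simp
  rw [this]
  exact isOpen_biInter_finset fun i _ => (isOpen_discrete _).preimage (continuous_apply i)

lemma exists_cylinder_subset [TopologicalSpace A] [DiscreteTopology A] {U : Set (ℕ → A)}
    {x : ℕ → A} (hU : U ∈ nhds x) : ∃ n, ∀ x', (∀ i < n, x' i = x i) → x' ∈ U := by
  rw [nhds_pi] at hU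
  simp only [nhds_discrete] at hU
  obtain ⟨I, t, ht, hsub⟩ := Filter.mem_pi'.1 hU
  refine ⟨(I.sup id) + 1, fun x' hx' => hsub ?_⟩
  intro i hi
  rw [hx' i (Nat.lt_succ_of_le (Finset.le_sup (f := id) (Finset.mem_coe.1 hi)))]
  exact ht i

lemma exists_sfx_eq (a₀ : A) (u : List A) : ∃ x : ℕ → A, sfx x u.length = u := by
  refine ⟨fun i => if h : i < u.length then u.reverse[i]'(by simpa using h) else a₀, ?_⟩
  apply List.reverse_injective
  simp only [sfx, List.reverse_reverse]
  apply List.ext_getElem (by simp)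
  intro i h1 h2
  simp only [List.getElem_ofFn]
  rw [dif_pos (by simpa using h2)]

lemma bound_of_finite {S : Set (List A)} (h : S.Finite) : ∃ N, ∀ u ∈ S, u.length ≤ N :=
  ⟨h.toFinset.sup List.length, fun u hu => Finset.le_sup (by simpa using hu)⟩

lemma exists_forall_sfx_not_mem [Fintype A] [TopologicalSpace A] [DiscreteTopology A]
    (h2 : ∃ a b : A, a ≠ b) {I : Set (List A)}
    (hI : ∀ u ∈ I, ∀ v w : List A, v ++ u ++ w ∈ I)
    (hinf : ¬ Set.Finite {u : List A | u ∉ I}) :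
    ∃ x : ℕ → A, ∀ n, sfx x n ∉ I := by
  obtain ⟨a₀, -, -⟩ := h2
  have hsuf : ∀ u v : List A, v <:+ u → u ∉ I → v ∉ I := by
    intro u v ⟨t, ht⟩ hu hv
    exact hu (by simpa [ht] using hI v hv t [])
  have hlong : ∀ n, ∃ u : List A, u ∉ I ∧ u.length = n := by
    intro n
    have : ∃ u : List A, u ∉ I ∧ n ≤ u.length := by
      by_contra h
      push_neg at h
      exact hinf ((List.finite_length_le A n).subset fun u hu => le_of_lt (h u hu))
    obtain ⟨u, hu, hn⟩ := this
    refine ⟨u.drop (u.length - n), hsuf u _ (List.drop_suffix _ _) hu, by simp; omega⟩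
  set K : ℕ → Set (ℕ → A) := fun n => {x | sfx x n ∉ I} with hK
  have hclosed : ∀ n, IsClosed (K n) := by
    intro n
    have heq : K n = (fun (x : ℕ → A) (i : Fin n) => x i) ⁻¹'
        {f : Fin n → A | (List.ofFn f).reverse ∉ I} := by
      ext x; simp [hK, sfx]
    rw [heq]
    exact (isClosed_discrete _).preimage (continuous_pi (fun i : Fin n => continuous_apply (i : ℕ)))
  have hne : ∀ n, (K n).Nonempty := by
    intro n
    obtain ⟨u, hu, hlen⟩ := hlong n
    obtain ⟨x, hx⟩ := exists_sfx_eq a₀ u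
    exact ⟨x, by rw [hK]; simp only [Set.mem_setOf_eq]; rw [← hlen, hx]; exact hu⟩
  have hmono : ∀ n, K (n + 1) ⊆ K n := by
    intro n x hx
    exact hsuf _ _ (sfx_suffix (Nat.le_succ n)) hx
  have : (⋂ n, K n).Nonempty :=
    IsCompact.nonempty_iInter_of_sequence_nonempty_isCompact_isClosed K hmono hne
      ((hclosed 0).isCompact) hclosed
  obtain ⟨x, hx⟩ := this
  exact ⟨x, fun n => Set.mem_iInter.1 hx n⟩



lemma exists_minSuffix_suffix' {I : Set (List A)} :
    ∀ n (u : List A), u.length ≤ n → u ∈ I → ∃ v ∈ minSuffix I, v <:+ u := by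
  intro n
  induction n with
  | zero =>
    intro u hu huI
    refine ⟨u, ⟨huI, fun v hv hvu => hvu.eq_of_length ?_⟩, List.suffix_refl u⟩
    have := hvu.length_le; omega
  | succ n ih =>
    intro u hu huI
    by_cases hmin : ∀ v ∈ I, v <:+ u → v = u
    · exact ⟨u, ⟨huI, hmin⟩, List.suffix_refl u⟩
    · push_neg at hmin
      obtain ⟨v, hvI, hvu, hne⟩ := hmin
      have hlt : v.length < u.length :=
        lt_of_le_of_ne hvu.length_le fun h => hne (hvu.eq_of_length h)
      obtain ⟨w, hw, hwv⟩ := ih v (by omega) hvI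
      exact ⟨w, hw, hwv.trans hvu⟩

lemma exists_minSuffix_suffix {I : Set (List A)} {u : List A} (hu : u ∈ I) :
    ∃ v ∈ minSuffix I, v <:+ u :=
  exists_minSuffix_suffix' u.length u le_rfl hu

section Main

variable [Fintype A] [TopologicalSpace A] [DiscreteTopology A]
  (h2 : ∃ a b : A, a ≠ b) {I : Set (List A)}
  (hI : ∀ u ∈ I, ∀ v w : List A, v ++ u ++ w ∈ I)

lemma F_to_P (hF : Set.Finite {u : List A | u ∉ I}) :
    IsOpen {p : (ℕ → A) × (ℕ → A) | relTau I p.1 p.2} := by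
  obtain ⟨N, hN⟩ := bound_of_finite hF
  rw [isOpen_iff_forall_mem_open]
  rintro ⟨x, y⟩ hxy
  obtain ⟨u, huI, hux, huy⟩ : ∃ u ∈ I, IsLSuffix u x ∧ IsLSuffix u y := by
    rcases hxy with heq | ⟨u, huI, hux, huy⟩
    · refine ⟨sfx x (N + 1), ?_, isLSuffix_sfx x (N + 1), ?_⟩
      · by_contra h
        have := hN _ h
        simp at this
      · simp only [Set.mem_setOf_eq] at heq
        rw [← heq]
        exact isLSuffix_sfx x (N + 1)
    · exact ⟨u, huI, hux, huy⟩
  refine ⟨(Prod.fst ⁻¹' {x' | ∀ i < u.length, x' i = x i}) ∩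
      (Prod.snd ⁻¹' {y' | ∀ i < u.length, y' i = y i}), ?_, ?_, ?_⟩
  · rintro ⟨x', y'⟩ ⟨h1, h2'⟩
    exact Or.inr ⟨u, huI, isLSuffix_transfer le_rfl h1 hux, isLSuffix_transfer le_rfl h2' huy⟩
  · exact ((cylinder_isOpen x u.length).preimage continuous_fst).inter
      ((cylinder_isOpen y u.length).preimage continuous_snd)
  · exact ⟨fun i _ => rfl, fun i _ => rfl⟩

include h2 hI in
lemma P_to_F (hP : IsOpen {p : (ℕ → A) × (ℕ → A) | relTau I p.1 p.2}) :
    Set.Finite {u : List A | u ∉ I} := by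
  classical
  by_contra hinf
  obtain ⟨x, hx⟩ := exists_forall_sfx_not_mem h2 hI hinf
  have hxx : ((x, x) : (ℕ → A) × (ℕ → A)) ∈ {p : (ℕ → A) × (ℕ → A) | relTau I p.1 p.2} :=
    Or.inl rfl
  have hmem := hP.mem_nhds hxx
  rw [mem_nhds_prod_iff] at hmem
  obtain ⟨U, hU, V, hV, hsub⟩ := hmem
  obtain ⟨m, hm⟩ := exists_cylinder_subset hU
  obtain ⟨k, hk⟩ := exists_cylinder_subset hV
  set n := max m k with hn
  obtain ⟨a, b, hab⟩ := h2
  set c := if x n = a then b else a with hc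
  have hcx : c ≠ x n := by
    rw [hc]
    split
    · next h => rw [h]; exact fun hh => hab hh.symm
    · next h => exact fun hh => h hh.symm
  set y := Function.update x n c with hy
  have hyn : y n = c := Function.update_self n c x
  have hagree : ∀ i, i ≠ n → y i = x i := fun i hi => Function.update_of_ne hi c x
  have hxy : ((x, y) : (ℕ → A) × (ℕ → A)) ∈ {p : (ℕ → A) × (ℕ → A) | relTau I p.1 p.2} := by
    apply hsub
    exact Set.mk_mem_prod (hm x fun i _ => rfl)
      (hk y fun i hik => hagree i (by omega))
  have hxyn : x n ≠ y n := by rw [hyn]; exact fun hh => hcx hh.symm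
  rcases hxy with heq | ⟨u, huI, hux, huy⟩
  · exact hxyn (congrFun heq n)
  · have := eq_sfx_of_isLSuffix hux
    exact hx u.length (this ▸ huI)

include h2 in
lemma F_to_M (hF : Set.Finite {u : List A | u ∉ I}) :
    Set.Finite (minSuffix I) ∧ IsSuffixCode (minSuffix I) ∧
      ∀ u : List A, u ∉ minSuffix I → ¬ IsSuffixCode (insert u (minSuffix I)) := by
  obtain ⟨N, hN⟩ := bound_of_finite hF
  refine ⟨?_, ?_, ?_⟩
  · apply (List.finite_length_le A (N + 1)).subset
    rintro (_ | ⟨a, t⟩) hu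
    · simp
    · have ht : t ∉ I := by
        intro htI
        have := hu.2 t htI ⟨[a], rfl⟩
        exact absurd (congrArg List.length this) (by simp)
      have := hN t ht
      simpa using Nat.succ_le_succ this
  · exact fun u hu v hv huv => hv.2 u hu.1 huv
  · intro u hu hcode
    by_cases huI : u ∈ I
    · obtain ⟨v, hv, hvu⟩ := exists_minSuffix_suffix huI
      have hne : v ≠ u := fun h => hu (h ▸ hv)
      exact hne (hcode v (Set.mem_insert_of_mem _ hv) u (Set.mem_insert _ _) hvu)
    · obtain ⟨a, b, hab⟩ := h2
      have hw : List.replicate (N + 1) a ++ u ∈ I := by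
        by_contra h
        have := hN _ h
        simp at this
        omega
      obtain ⟨v, hv, hvw⟩ := exists_minSuffix_suffix hw
      have husuf : u <:+ List.replicate (N + 1) a ++ u := ⟨_, rfl⟩
      rcases List.suffix_or_suffix_of_suffix hvw husuf with h | h
      · have hne : v ≠ u := fun h' => huI (h' ▸ hv.1)
        exact hne (hcode v (Set.mem_insert_of_mem _ hv) u (Set.mem_insert _ _) h)
      · have hne : u ≠ v := fun h' => huI (h' ▸ hv.1)
        exact hne (hcode u (Set.mem_insert _ _) v (Set.mem_insert_of_mem _ hv) h)

include h2 hI in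
lemma M_to_F (hM : Set.Finite (minSuffix I) ∧ IsSuffixCode (minSuffix I) ∧
      ∀ u : List A, u ∉ minSuffix I → ¬ IsSuffixCode (insert u (minSuffix I))) :
    Set.Finite {u : List A | u ∉ I} := by
  obtain ⟨hfin, hcode, hmax⟩ := hM
  by_contra hinf
  obtain ⟨x, hx⟩ := exists_forall_sfx_not_mem h2 hI hinf
  obtain ⟨N, hN⟩ := bound_of_finite hfin
  set u := sfx x (N + 1) with hu
  have huI : u ∉ I := hx (N + 1)
  have humin : u ∉ minSuffix I := fun h => huI h.1
  have hnc := hmax u humin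
  rw [IsSuffixCode] at hnc
  push_neg at hnc
  obtain ⟨v, hv, w, hw, hvw, hne⟩ := hnc
  rcases hv with rfl | hv
  · rcases hw with rfl | hw
    · exact hne rfl
    · have h1 := hvw.length_le
      have h2' := hN w hw
      rw [hu, sfx_length] at h1
      omega
  · rcases hw with rfl | hw
    · have hvx : IsLSuffix v x := isLSuffix_of_suffix hvw (isLSuffix_sfx x (N + 1))
      have := eq_sfx_of_isLSuffix hvx
      exact hx v.length (this ▸ hv.1)
    · exact hne (hcode v hv w hw hvw)

end Main

end RelTauAux

/-- for a two-sided ideal I of A* (|A| ≥ 2): τ_I is open iff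
  A* ∖ I is finite, iff the suffix-minimal elements of I form a finite maximal
  suffix code. -/
theorem relTau_open_iff {A : Type*} [Fintype A] [TopologicalSpace A] [DiscreteTopology A]
    (h2 : ∃ a b : A, a ≠ b) (I : Set (List A))
    (hI : ∀ u ∈ I, ∀ v w : List A, v ++ u ++ w ∈ I) :
    (IsOpen {p : (ℕ → A) × (ℕ → A) | relTau I p.1 p.2} ↔
      Set.Finite {u : List A | u ∉ I}) ∧
    (IsOpen {p : (ℕ → A) × (ℕ → A) | relTau I p.1 p.2} ↔
      (Set.Finite (minSuffix I) ∧ IsSuffixCode (minSuffix I) ∧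
        ∀ u : List A, u ∉ minSuffix I → ¬ IsSuffixCode (insert u (minSuffix I)))) := by
  refine ⟨⟨RelTauAux.P_to_F h2 hI, RelTauAux.F_to_P⟩,
    fun hP => RelTauAux.F_to_M h2 (RelTauAux.P_to_F h2 hI hP),
    fun hM => RelTauAux.F_to_P (RelTauAux.M_to_F h2 hI hM)⟩
end

section
/- If |A| > 1 and L, L' are left ideals of A*, then τ_L ⊆ τ_{L'} if and only if L ⊆ L'. -/
lemma lapp_eval {A : Type*} (x : ℕ → A) (u : List A) (n : ℕ) (h : n < u.length) :
    lapp x u n = u.reverse[n]'(by simpa using h) := by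
  simp [lapp, h]

lemma suffix_of_suffix_le {A : Type*} {v w : List A} {x : ℕ → A}
    (hv : IsLSuffix v x) (hw : IsLSuffix w x) (hle : v.length ≤ w.length) :
    v <:+ w := by
  obtain ⟨z, hz⟩ := hv
  obtain ⟨z', hz'⟩ := hw
  rw [← List.reverse_prefix]
  rw [List.prefix_iff_eq_take]
  apply List.ext_getElem
  · simp [Nat.min_eq_left, hle]
  · intro i h1 h2
    have hiv : i < v.length := by simpa using h1
    have hiw : i < w.length := lt_of_lt_of_le hiv hle
    have e1 : x i = v.reverse[i]'(by simpa using hiv) := by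
      rw [hz]; exact lapp_eval z v i hiv
    have e2 : x i = w.reverse[i]'(by simpa using hiw) := by
      rw [hz']; exact lapp_eval z' w i hiw
    simp only [List.getElem_take]
    rw [← e1, e2]

/-- if |A| > 1 and L, L' are left ideals of A*, then
  τ_L ⊆ τ_{L'} iff L ⊆ L'. -/
theorem relTau_mono_iff {A : Type*} [Fintype A] (h2 : ∃ a b : A, a ≠ b)
    (L L' : Set (List A))
    (hL : ∀ u ∈ L, ∀ v : List A, v ++ u ∈ L)
    (hL' : ∀ u ∈ L', ∀ v : List A, v ++ u ∈ L') :
    (∀ x y : ℕ → A, relTau L x y → relTau L' x y) ↔ L ⊆ L' := by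
  constructor
  · intro h u hu
    obtain ⟨a, b, hab⟩ := h2
    set x := lapp (fun _ => a) u with hx
    set y := lapp (fun _ => b) u with hy
    have hxu : x u.length = a := by simp [hx, lapp]
    have hyu : y u.length = b := by simp [hy, lapp]
    have hxy : x ≠ y := fun he => hab (by rw [← hxu, ← hyu, he])
    have hsx : IsLSuffix u x := ⟨_, rfl⟩
    have hsy : IsLSuffix u y := ⟨_, rfl⟩
    have := h x y (Or.inr ⟨u, hu, hsx, hsy⟩)
    rcases this with he | ⟨v, hv, hvx, hvy⟩
    · exact absurd he hxy
    · by_cases hlen : v.length ≤ u.length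
      · obtain ⟨w, hw⟩ := suffix_of_suffix_le hvx hsx hlen
        rw [← hw]; exact hL' v hv w
      · push_neg at hlen
        exfalso
        obtain ⟨z, hz⟩ := hvx
        obtain ⟨z', hz'⟩ := hvy
        have e1 : x u.length = v.reverse[u.length]'(by simpa using hlen) := by
          rw [hz]; exact lapp_eval z v u.length hlen
        have e2 : y u.length = v.reverse[u.length]'(by simpa using hlen) := by
          rw [hz']; exact lapp_eval z' v u.length hlen
        exact hab (by rw [← hxu, ← hyu, e1, e2])
  · intro hLL' x y hxy
    rcases hxy with he | ⟨u, hu, h1, h2'⟩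
    · exact Or.inl he
    · exact Or.inr ⟨u, hLL' hu, h1, h2'⟩
end

section
/- If |A| > 1, then for any two-sided ideals I, J of A*, τ_{I∩J} = τ_I ∩ τ_J and τ_{I∪J} = τ_I ∪ τ_J; hence I ↦ τ_I is a lattice isomorphism from the lattice of ideals of A* onto the lattice of special right congruences on A^{-ω}. -/
lemma lsuffix_eval {A : Type*} {u : List A} {x : ℕ → A} (h : IsLSuffix u x)
    {n : ℕ} (hn : n < u.length) : x n = u.reverse[n]'(by simpa using hn) := by
  obtain ⟨y, rfl⟩ := h
  simp [lapp, hn]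

lemma lsuffix_iff {A : Type*} {u : List A} {x : ℕ → A} :
    IsLSuffix u x ↔ u.reverse = List.ofFn (fun i : Fin u.length => x i) := by
  constructor
  · intro h
    apply List.ext_getElem (by simp)
    intro n h1 h2
    simp only [List.getElem_ofFn]
    exact (lsuffix_eval h (by simpa using h1)).symm
  · intro h
    refine ⟨fun n => x (n + u.length), funext fun n => ?_⟩
    unfold lapp
    split
    · next hn =>
        symm
        rw [List.getElem_of_eq h]
        simp
    · next hn => congr 1; omega

lemma lsuffix_comparable {A : Type*} {u v : List A} {x : ℕ → A}
    (hu : IsLSuffix u x) (hv : IsLSuffix v x) (hle : u.length ≤ v.length) :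
    u <:+ v := by
  rw [← List.reverse_prefix]
  rw [lsuffix_iff] at hu hv
  rw [hu, hv]
  refine ⟨List.ofFn (fun i : Fin (v.length - u.length) => x (u.length + i)), ?_⟩
  apply List.ext_getElem (by simp; omega)
  intro n h1 h2
  rcases Nat.lt_or_ge n u.length with hn | hn
  · rw [List.getElem_append_left (by simpa using hn)]
    simp
  · rw [List.getElem_append_right (by simpa using hn)]
    simp only [List.getElem_ofFn, List.length_ofFn]
    congr 1
    omega

lemma lsuffix_lapp {A : Type*} (y : ℕ → A) (u : List A) : IsLSuffix u (lapp y u) :=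
  ⟨y, rfl⟩

/-- if |A| > 1 then, for two-sided ideals I, J of A*,
  τ_{I∩J} = τ_I ∩ τ_J and τ_{I∪J} = τ_I ∪ τ_J; moreover I ↦ τ_I is
  order-reflecting (hence injective), so it is a lattice isomorphism from the
  lattice of ideals of A* onto the lattice of special right congruences. -/
theorem relTau_lattice_iso {A : Type*} [Fintype A] (h2 : ∃ a b : A, a ≠ b) :
    (∀ I J : Set (List A),
      (∀ u ∈ I, ∀ v w : List A, v ++ u ++ w ∈ I) →
      (∀ u ∈ J, ∀ v w : List A, v ++ u ++ w ∈ J) →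
      (∀ x y : ℕ → A, relTau (I ∩ J) x y ↔ (relTau I x y ∧ relTau J x y)) ∧
      (∀ x y : ℕ → A, relTau (I ∪ J) x y ↔ (relTau I x y ∨ relTau J x y))) ∧
    (∀ I J : Set (List A),
      (∀ u ∈ I, ∀ v w : List A, v ++ u ++ w ∈ I) →
      (∀ u ∈ J, ∀ v w : List A, v ++ u ++ w ∈ J) →
      ((∀ x y : ℕ → A, relTau I x y → relTau J x y) ↔ I ⊆ J)) := by
  obtain ⟨a, b, hab⟩ := h2
  have mono : ∀ (I J : Set (List A)), I ⊆ J → ∀ x y : ℕ → A,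
      relTau I x y → relTau J x y := by
    rintro I J hIJ x y (rfl | ⟨u, hu, hx, hy⟩)
    · exact Or.inl rfl
    · exact Or.inr ⟨u, hIJ hu, hx, hy⟩
  constructor
  · intro I J hI hJ
    constructor
    · intro x y
      constructor
      · intro h
        exact ⟨mono _ _ Set.inter_subset_left x y h,
               mono _ _ Set.inter_subset_right x y h⟩
      · rintro ⟨(rfl | ⟨u, hu, hux, huy⟩), hJ'⟩
        · exact Or.inl rfl
        rcases hJ' with rfl | ⟨v, hv, hvx, hvy⟩
        · exact Or.inl rfl
        rcases le_or_gt u.length v.length with hle | hlt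
        · obtain ⟨w, rfl⟩ := lsuffix_comparable hux hvx hle
          refine Or.inr ⟨w ++ u, ⟨?_, hv⟩, hvx, hvy⟩
          simpa using hI u hu w []
        · obtain ⟨w, rfl⟩ := lsuffix_comparable hvx hux hlt.le
          refine Or.inr ⟨w ++ v, ⟨hu, ?_⟩, hux, huy⟩
          simpa using hJ v hv w []
    · intro x y
      constructor
      · rintro (rfl | ⟨u, hu | hu, hx, hy⟩)
        · exact Or.inl (Or.inl rfl)
        · exact Or.inl (Or.inr ⟨u, hu, hx, hy⟩)
        · exact Or.inr (Or.inr ⟨u, hu, hx, hy⟩)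
      · rintro (h | h)
        · exact mono _ _ Set.subset_union_left x y h
        · exact mono _ _ Set.subset_union_right x y h
  · intro I J hI hJ
    constructor
    · intro h u hu
      set x : ℕ → A := lapp (fun _ => a) u with hx
      set y : ℕ → A := lapp (fun _ => b) u with hy
      have hxy : x ≠ y := by
        intro he
        have := congrFun he u.length
        simp [hx, hy, lapp] at this
        exact hab this
      have hxa : ∀ n, u.length ≤ n → x n = a := by
        intro n hn
        simp [hx, lapp, Nat.not_lt.mpr hn]
      have hyb : ∀ n, u.length ≤ n → y n = b := by
        intro n hn
        simp [hy, lapp, Nat.not_lt.mpr hn]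
      have hτ : relTau J x y := h x y (Or.inr ⟨u, hu, lsuffix_lapp _ _, lsuffix_lapp _ _⟩)
      rcases hτ with he | ⟨v, hv, hvx, hvy⟩
      · exact absurd he hxy
      have hlen : v.length ≤ u.length := by
        by_contra hc
        push_neg at hc
        have h1 := lsuffix_eval hvx (n := u.length) hc
        have h2 := lsuffix_eval hvy (n := u.length) hc
        rw [hxa _ le_rfl] at h1
        rw [hyb _ le_rfl] at h2
        exact hab (h1.trans h2.symm)
      obtain ⟨w, rfl⟩ := lsuffix_comparable hvx (lsuffix_lapp (fun _ => a) u) hlen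
      simpa using hJ v hv w []
    · intro h x y
      exact mono I J h x y
end

section
/- Let |A| > 1 and ρ a closed right congruence on A^{-ω}. Then ρ is special (ρ = τ_I for some two-sided ideal I) if and only if ρ = τ_{Res(ρ)}, if and only if Λ'_ρ ⊆ Res(ρ), i.e., every longest common suffix of a nontrivially ρ-related pair is a reset word for Cay(ρ). -/
/-- Λ'_ρ: the longest common suffixes lcs(x,y) of pairs (x,y) ∈ ρ with x ≠ y -/
def LambdaP {A : Type*} (ρ : (ℕ → A) → (ℕ → A) → Prop) : Set (List A) :=
  {u | ∃ x y : ℕ → A, ρ x y ∧ x ≠ y ∧ IsLSuffix u x ∧ IsLSuffix u y ∧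
    ∀ v : List A, IsLSuffix v x → IsLSuffix v y → v <:+ u}

/-- Λ_ρ: the longest common suffixes of nonsingular ρ-classes -/
def Lambda {A : Type*} (ρ : (ℕ → A) → (ℕ → A) → Prop) : Set (List A) :=
  {u | ∃ x : ℕ → A, (∃ y : ℕ → A, ρ x y ∧ y ≠ x) ∧
    (∀ z : ℕ → A, ρ x z → IsLSuffix u z) ∧
    ∀ v : List A, (∀ z : ℕ → A, ρ x z → IsLSuffix v z) → v <:+ u}

/-- A*S: the words having a suffix in S -/
def leftIdealOf {A : Type*} (S : Set (List A)) : Set (List A) :=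
  {w | ∃ v : List A, ∃ s ∈ S, w = v ++ s}

/-- Res(ρ): the reset words of the Cayley graph Cay(ρ) -/
def ResSet {A : Type*} {ρ : (ℕ → A) → (ℕ → A) → Prop} (hρ : IsRightCongruence ρ) :
    Set (List A) :=
  {w | ∀ q q' r r' : Quotient (caySetoid hρ),
    HasPath (cayE hρ) q w q' → HasPath (cayE hρ) r w r' → q' = r'}


namespace SpecAux
variable {A : Type*}

theorem lapp_nil (x : ℕ → A) : lapp x [] = x := by
  funext n; simp [lapp]

theorem lapp_append (x : ℕ → A) (v u : List A) :
    lapp (lapp x v) u = lapp x (v ++ u) := by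
  funext n
  simp only [lapp, List.length_append, List.reverse_append]
  by_cases h1 : n < u.length
  · rw [dif_pos h1, dif_pos (by omega)]
    rw [List.getElem_append_left (by simpa using h1)]
  · rw [dif_neg h1]
    by_cases h2 : n - u.length < v.length
    · rw [dif_pos h2, dif_pos (by omega)]
      rw [List.getElem_append_right (by simpa using h1)]
      simp
    · rw [dif_neg h2, dif_neg (by omega)]
      congr 1; omega

theorem isLSuffix_iff (v : List A) (x : ℕ → A) :
    IsLSuffix v x ↔ ∀ k (h : k < v.length), x k = v.reverse[k]'(by simpa using h) := by
  constructor
  · rintro ⟨y, rfl⟩ k h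
    simp [lapp, h]
  · intro h
    refine ⟨fun m => x (m + v.length), funext fun n => ?_⟩
    simp only [lapp]
    by_cases hn : n < v.length
    · rw [dif_pos hn]; exact h n hn
    · rw [dif_neg hn]; congr 1; omega

theorem exists_lcs (x y : ℕ → A) (hxy : x ≠ y) :
    ∃ u : List A, IsLSuffix u x ∧ IsLSuffix u y ∧
      ∀ v, IsLSuffix v x → IsLSuffix v y → v <:+ u := by
  classical
  have hex : ∃ k, x k ≠ y k := by
    by_contra h; push_neg at h; exact hxy (funext h)
  set n := Nat.find hex with hn
  have hlt : ∀ k < n, x k = y k := fun k hk => by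
    by_contra h; exact Nat.find_min hex hk h
  have hne : x n ≠ y n := Nat.find_spec hex
  refine ⟨(List.ofFn (fun i : Fin n => x i)).reverse, ?_, ?_, ?_⟩
  · rw [isLSuffix_iff]
    intro k h
    simp only [List.length_reverse, List.length_ofFn] at h
    simp [h]
  · rw [isLSuffix_iff]
    intro k h
    simp only [List.length_reverse, List.length_ofFn] at h
    simp [h, hlt k h]
  · intro v hvx hvy
    rw [isLSuffix_iff] at hvx hvy
    have hlen : v.length ≤ n := by
      by_contra h
      push_neg at h
      exact hne ((hvx n h).trans (hvy n h).symm)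
    rw [← List.reverse_prefix]
    have : v.reverse = (List.ofFn (fun i : Fin n => x i)).take v.length := by
      apply List.ext_getElem
      · simp [hlen]
      · intro k h1 h2
        have hk : k < v.length := by simpa using h1
        rw [List.getElem_take]
        simp only [List.getElem_ofFn]
        exact (hvx k hk).symm
    rw [List.reverse_reverse, this]
    exact List.take_prefix _ _

theorem hasPath_append {Q : Type*} (E : Q → A → Q → Prop) (v w : List A) (q q' : Q) :
    HasPath E q (v ++ w) q' ↔ ∃ p, HasPath E q v p ∧ HasPath E p w q' := by
  induction v generalizing q with
  | nil => simp [HasPath]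
  | cons a t ih =>
    constructor
    · rintro ⟨p, hp, hrest⟩
      obtain ⟨p2, h1, h2⟩ := (ih p).1 hrest
      exact ⟨p2, ⟨p, hp, h1⟩, h2⟩
    · rintro ⟨p2, ⟨p, hp, h1⟩, h2⟩
      exact ⟨p, hp, (ih p).2 ⟨p2, h1, h2⟩⟩

variable {ρ : (ℕ → A) → (ℕ → A) → Prop} (hρ : IsRightCongruence ρ)

theorem hasPath_mk (x : ℕ → A) (w : List A) :
    HasPath (cayE hρ) (Quotient.mk (caySetoid hρ) x) w
      (Quotient.mk (caySetoid hρ) (lapp x w)) := by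
  induction w generalizing x with
  | nil => show _ = _ ; rw [lapp_nil]
  | cons a u ih =>
    refine ⟨Quotient.mk (caySetoid hρ) (lapp x [a]), ⟨x, rfl, rfl⟩, ?_⟩
    have := ih (lapp x [a])
    rwa [lapp_append] at this

theorem hasPath_eq (x : ℕ → A) (w : List A) (q' : Quotient (caySetoid hρ)) :
    HasPath (cayE hρ) (Quotient.mk (caySetoid hρ) x) w q' →
      q' = Quotient.mk (caySetoid hρ) (lapp x w) := by
  induction w generalizing x with
  | nil =>
    intro h
    rw [lapp_nil]
    exact (h : _ = _).symm
  | cons a u ih =>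
    rintro ⟨p, ⟨z, hz1, rfl⟩, hp⟩
    have hzx : ρ z x := hρ.1.symm (Quotient.exact hz1)
    have : Quotient.mk (caySetoid hρ) (lapp z [a]) =
        Quotient.mk (caySetoid hρ) (lapp x [a]) :=
      Quotient.sound (hρ.2 z x a hzx)
    rw [this] at hp
    have := ih (lapp x [a]) hp
    rwa [lapp_append] at this

theorem hasPath_det (w : List A) (q q₁ q₂ : Quotient (caySetoid hρ)) :
    HasPath (cayE hρ) q w q₁ → HasPath (cayE hρ) q w q₂ → q₁ = q₂ := by
  obtain ⟨x, rfl⟩ := q.exists_rep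
  intro h1 h2
  rw [hasPath_eq hρ x w q₁ h1, hasPath_eq hρ x w q₂ h2]

theorem res_ideal : ∀ u ∈ ResSet hρ, ∀ v w : List A, v ++ u ++ w ∈ ResSet hρ := by
  intro u hu v w q q' r r' h1 h2
  obtain ⟨p2, hrest1, hqw⟩ := (hasPath_append _ _ _ _ _).1 h1
  obtain ⟨p1, hqv, hqu⟩ := (hasPath_append _ _ _ _ _).1 hrest1
  obtain ⟨s2, hrest2, hrw⟩ := (hasPath_append _ _ _ _ _).1 h2
  obtain ⟨s1, hrv, hru⟩ := (hasPath_append _ _ _ _ _).1 hrest2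
  have hps : p2 = s2 := hu p1 p2 s1 s2 hqu hru
  rw [hps] at hqw
  exact hasPath_det hρ w s2 q' r' hqw hrw

theorem stepA (hS : ∃ I : Set (List A),
      (∀ u ∈ I, ∀ v w : List A, v ++ u ++ w ∈ I) ∧ ρ = relTau I) :
    LambdaP ρ ⊆ ResSet hρ := by
  obtain ⟨I, hI, hρI⟩ := hS
  rintro u ⟨x, y, hxy, hne, hux, huy, hmax⟩
  rw [hρI] at hxy
  rcases hxy with rfl | ⟨w, hwI, hwx, hwy⟩
  · exact absurd rfl hne
  obtain ⟨t, ht⟩ := hmax w hwx hwy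
  have huI : u ∈ I := by
    have := hI w hwI t []
    rwa [List.append_nil, ht] at this

  intro q q' r r' h1 h2
  obtain ⟨x₀, rfl⟩ := q.exists_rep
  obtain ⟨y₀, rfl⟩ := r.exists_rep
  rw [hasPath_eq hρ x₀ u q' h1, hasPath_eq hρ y₀ u r' h2]
  apply Quotient.sound
  show ρ _ _
  rw [hρI]
  exact Or.inr ⟨u, huI, ⟨x₀, rfl⟩, ⟨y₀, rfl⟩⟩

theorem stepB (h : LambdaP ρ ⊆ ResSet hρ) : ρ = relTau (ResSet hρ) := by
  funext x y
  apply propext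
  constructor
  · intro hxy
    by_cases hne : x = y
    · exact Or.inl hne
    · obtain ⟨u, hux, huy, hmax⟩ := exists_lcs x y hne
      exact Or.inr ⟨u, h ⟨x, y, hxy, hne, hux, huy, hmax⟩, hux, huy⟩
  · rintro (rfl | ⟨w, hw, ⟨x', rfl⟩, ⟨y', hy'⟩⟩)
    · exact hρ.1.refl x
    · subst hy'
      have h1 := hasPath_mk hρ x' w
      have h2 := hasPath_mk hρ y' w
      exact Quotient.exact (hw _ _ _ _ h1 h2)

end SpecAux

/-- for a closed right congruence ρ on A^{-ω} (|A| > 1): ρ is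
  special (ρ = τ_I for some two-sided ideal I) iff ρ = τ_{Res(ρ)}, iff
  Λ'_ρ ⊆ Res(ρ). -/
theorem special_closed_rightCongruence_iff {A : Type*} [Fintype A]
    [TopologicalSpace A] [DiscreteTopology A] (h2 : ∃ a b : A, a ≠ b)
    (ρ : (ℕ → A) → (ℕ → A) → Prop) (hρ : IsRightCongruence ρ)
    (hclosed : IsClosed {p : (ℕ → A) × (ℕ → A) | ρ p.1 p.2}) :
    ((∃ I : Set (List A), (∀ u ∈ I, ∀ v w : List A, v ++ u ++ w ∈ I) ∧ ρ = relTau I) ↔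
      ρ = relTau (ResSet hρ)) ∧
    ((∃ I : Set (List A), (∀ u ∈ I, ∀ v w : List A, v ++ u ++ w ∈ I) ∧ ρ = relTau I) ↔
      LambdaP ρ ⊆ ResSet hρ) := by
  have P1 := @SpecAux.stepA A ρ hρ
  have P2 := @SpecAux.stepB A ρ hρ
  have P3 : ρ = relTau (ResSet hρ) → (∃ I : Set (List A),
      (∀ u ∈ I, ∀ v w : List A, v ++ u ++ w ∈ I) ∧ ρ = relTau I) :=
    fun h => ⟨ResSet hρ, SpecAux.res_ideal hρ, h⟩
  exact ⟨⟨fun hS => P2 (P1 hS), P3⟩, ⟨P1, fun h => P3 (P2 h)⟩⟩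
end
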